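/- Let G be a hypo-efficient-domination graph which is also vertex-domination-critical. Then for every vertex v of G, the graph G−v has exactly one efficient dominating set. If in addition G is regular, then G−v has a unique minimum dominating set for each v, so G is a hypo-unique-domination graph. -/

import Mathlib

open SimpleGraph

variable {V : Type*}

/-- `D` is a dominating set of `G`. -/
def IsDomSet (G : SimpleGraph V) (D : Finset V) : Prop :=
  ∀ v : V, ∃ u ∈ D, u = v ∨ G.Adj u v

/-- The domination number `γ(G)`. -/
noncomputable def domNum (G : SimpleGraph V) : ℕ :=
  sInf {n | ∃ D : Finset V, IsDomSet G D ∧ D.card = n}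

/-- `D` is a minimum dominating set (γ-set) of `G`. -/
def IsGammaSet (G : SimpleGraph V) (D : Finset V) : Prop :=
  IsDomSet G D ∧ D.card = domNum G

/-- The graph `G - x` obtained by deleting the vertex `x`. -/
def vdel (G : SimpleGraph V) (x : V) : SimpleGraph {u : V // u ≠ x} :=
  SimpleGraph.comap Subtype.val G

/-- `G` is a hypo-unique-domination graph: `G` has at least two γ-sets,
but `G - x` has a unique γ-set for every vertex `x`. -/
def HypoUD (G : SimpleGraph V) : Prop :=
  (∃ D₁ D₂ : Finset V, IsGammaSet G D₁ ∧ IsGammaSet G D₂ ∧ D₁ ≠ D₂) ∧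
  ∀ x : V, ∃! D : Finset {u : V // u ≠ x}, IsGammaSet (vdel G x) D

/-- `D` is an efficient dominating set of `G`: every vertex is dominated exactly once. -/
def IsEDS (G : SimpleGraph V) (D : Finset V) : Prop :=
  ∀ v : V, ∃! u : V, u ∈ D ∧ (u = v ∨ G.Adj u v)

/-- `G` is a hypo-efficient-domination graph: `G` has no EDS,
but `G - x` has an EDS for every vertex `x`. -/
def HypoED (G : SimpleGraph V) : Prop :=
  (¬ ∃ D : Finset V, IsEDS G D) ∧
  ∀ x : V, ∃ D : Finset {u : V // u ≠ x}, IsEDS (vdel G x) D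

/-! ### Auxiliary definitions: `G - x` phrased inside `V` -/

/-- `E ⊆ V ∖ {x}` dominates `G - x`, phrased in `V`. -/
def DSx (G : SimpleGraph V) (x : V) (E : Finset V) : Prop :=
  x ∉ E ∧ ∀ v : V, v ≠ x → ∃ u ∈ E, u = v ∨ G.Adj u v

/-- `E ⊆ V ∖ {x}` is an efficient dominating set of `G - x`, phrased in `V`. -/
def EDSx (G : SimpleGraph V) (x : V) (E : Finset V) : Prop :=
  x ∉ E ∧ ∀ v : V, v ≠ x → ∃! u : V, u ∈ E ∧ (u = v ∨ G.Adj u v)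

section Bridge

variable [DecidableEq V] (G : SimpleGraph V) (x : V)
set_option linter.unusedSectionVars false

lemma mem_map_subtype_ne {D : Finset {u : V // u ≠ x}} {a : V} :
    a ∈ D.map (Function.Embedding.subtype _) ↔ ∃ h : a ≠ x, ⟨a, h⟩ ∈ D := by
  simp only [Finset.mem_map, Function.Embedding.coe_subtype]
  constructor
  · rintro ⟨⟨b, hb⟩, hbD, rfl⟩; exact ⟨hb, hbD⟩
  · rintro ⟨h, hD⟩; exact ⟨⟨a, h⟩, hD, rfl⟩

lemma x_not_mem_map {D : Finset {u : V // u ≠ x}} :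
    x ∉ D.map (Function.Embedding.subtype _) := by
  rw [mem_map_subtype_ne]; rintro ⟨h, -⟩; exact h rfl

lemma subtype_map_of_not_mem {E : Finset V} (hx : x ∉ E) :
    (E.subtype (· ≠ x)).map (Function.Embedding.subtype _) = E := by
  rw [Finset.subtype_map]
  exact Finset.filter_true_of_mem (fun a ha h => hx (h ▸ ha))

lemma isEDS_map_iff (D : Finset {u : V // u ≠ x}) :
    IsEDS (vdel G x) D ↔ EDSx G x (D.map (Function.Embedding.subtype _)) := by
  constructor
  · intro h
    refine ⟨x_not_mem_map x, fun v hv => ?_⟩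
    obtain ⟨u, ⟨huD, hcond⟩, huniq⟩ := h ⟨v, hv⟩
    refine ⟨u.1, ⟨Finset.mem_map_of_mem _ huD, ?_⟩, ?_⟩
    · rcases hcond with h1 | h1
      · exact Or.inl (congrArg Subtype.val h1)
      · exact Or.inr h1
    · rintro y ⟨hyD, hy⟩
      rw [mem_map_subtype_ne] at hyD
      obtain ⟨hyx, hyD⟩ := hyD
      have : (⟨y, hyx⟩ : {u : V // u ≠ x}) = u := by
        refine huniq _ ⟨hyD, ?_⟩
        rcases hy with h1 | h1
        · exact Or.inl (Subtype.ext h1)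
        · exact Or.inr h1
      exact congrArg Subtype.val this
  · intro h v
    obtain ⟨u, ⟨huD, hcond⟩, huniq⟩ := h.2 v.1 v.2
    rw [mem_map_subtype_ne] at huD
    obtain ⟨hux, huD⟩ := huD
    refine ⟨⟨u, hux⟩, ⟨huD, ?_⟩, ?_⟩
    · rcases hcond with h1 | h1
      · exact Or.inl (Subtype.ext h1)
      · exact Or.inr h1
    · rintro y ⟨hyD, hy⟩
      refine Subtype.ext (huniq y.1 ⟨(mem_map_subtype_ne x).2 ⟨y.2, hyD⟩, ?_⟩)
      rcases hy with h1 | h1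
      · exact Or.inl (congrArg Subtype.val h1)
      · exact Or.inr h1

lemma isDomSet_map_iff (D : Finset {u : V // u ≠ x}) :
    IsDomSet (vdel G x) D ↔ DSx G x (D.map (Function.Embedding.subtype _)) := by
  constructor
  · intro h
    refine ⟨x_not_mem_map x, fun v hv => ?_⟩
    obtain ⟨u, huD, hcond⟩ := h ⟨v, hv⟩
    refine ⟨u.1, Finset.mem_map_of_mem _ huD, ?_⟩
    rcases hcond with h1 | h1
    · exact Or.inl (congrArg Subtype.val h1)
    · exact Or.inr h1
  · intro h v
    obtain ⟨u, huD, hcond⟩ := h.2 v.1 v.2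
    rw [mem_map_subtype_ne] at huD
    obtain ⟨hux, huD⟩ := huD
    refine ⟨⟨u, hux⟩, huD, ?_⟩
    rcases hcond with h1 | h1
    · exact Or.inl (Subtype.ext h1)
    · exact Or.inr h1

lemma domNum_vdel_eq :
    domNum (vdel G x) = sInf {n | ∃ E : Finset V, DSx G x E ∧ E.card = n} := by
  unfold domNum
  congr 1
  ext n
  constructor
  · rintro ⟨D, hD, rfl⟩
    exact ⟨D.map (Function.Embedding.subtype _), (isDomSet_map_iff G x D).1 hD,
      (Finset.card_map _)⟩
  · rintro ⟨E, hE, rfl⟩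
    refine ⟨E.subtype (· ≠ x), ?_, ?_⟩
    · rw [isDomSet_map_iff, subtype_map_of_not_mem x hE.1]; exact hE
    · have := congrArg Finset.card (subtype_map_of_not_mem x hE.1)
      rwa [Finset.card_map] at this

end Bridge

/-! ### Core lemmas -/

section Core

variable [Fintype V] [DecidableEq V] (G : SimpleGraph V) [DecidableRel G.Adj]
set_option linter.unusedSectionVars false

lemma exists_gammaSet : ∃ D : Finset V, IsDomSet G D ∧ D.card = domNum G := by
  have hne : {n | ∃ D : Finset V, IsDomSet G D ∧ D.card = n}.Nonempty :=
    ⟨_, Finset.univ, fun v => ⟨v, Finset.mem_univ v, Or.inl rfl⟩, rfl⟩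
  exact Nat.sInf_mem hne

lemma domNum_le_card {D : Finset V} (hD : IsDomSet G D) : domNum G ≤ D.card :=
  Nat.sInf_le ⟨D, hD, rfl⟩

/-- The domination number of `G - x`, phrased in `V`. -/
noncomputable def gx (x : V) : ℕ := sInf {n | ∃ E : Finset V, DSx G x E ∧ E.card = n}

lemma gx_eq_domNum_vdel (x : V) : domNum (vdel G x) = gx G x := domNum_vdel_eq G x

lemma exists_gxSet (x : V) : ∃ E : Finset V, DSx G x E ∧ E.card = gx G x := by
  have hne : {n | ∃ E : Finset V, DSx G x E ∧ E.card = n}.Nonempty := by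
    refine ⟨_, Finset.univ.erase x, ⟨Finset.notMem_erase x _, fun v hv =>
      ⟨v, Finset.mem_erase.2 ⟨hv, Finset.mem_univ v⟩, Or.inl rfl⟩⟩, rfl⟩
  exact Nat.sInf_mem hne

lemma gx_le_card {x : V} {E : Finset V} (hE : DSx G x E) : gx G x ≤ E.card :=
  Nat.sInf_le ⟨E, hE, rfl⟩

lemma edsx_dsx {x : V} {M : Finset V} (hM : EDSx G x M) : DSx G x M :=
  ⟨hM.1, fun v hv => by
    obtain ⟨u, ⟨huM, hcond⟩, -⟩ := hM.2 v hv
    exact ⟨u, huM, hcond⟩⟩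

/-- An efficient dominating set of `G - x` is at most as large as any dominating set. -/
lemma edsx_card_le {x : V} {M S : Finset V} (hM : EDSx G x M) (hS : DSx G x S) :
    M.card ≤ S.card := by
  have hdom : ∀ m ∈ M, ∃ s ∈ S, s = m ∨ G.Adj s m := by
    intro m hm
    have hmx : m ≠ x := fun h => hM.1 (h ▸ hm)
    exact hS.2 m hmx
  set f : V → V := fun m => if h : ∃ s ∈ S, s = m ∨ G.Adj s m then h.choose else x with hf
  have hspec : ∀ m ∈ M, f m ∈ S ∧ (f m = m ∨ G.Adj (f m) m) := by
    intro m hm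
    have h := hdom m hm
    simp only [hf, dif_pos h]
    exact ⟨h.choose_spec.1, h.choose_spec.2⟩
  refine Finset.card_le_card_of_injOn f (fun m hm => (hspec m hm).1) ?_
  intro m₁ hm₁ m₂ hm₂ he
  have h1 := (hspec m₁ hm₁).2
  have h2 := (hspec m₂ hm₂).2
  rw [he] at h1
  have hsx : f m₂ ≠ x := fun h => hS.1 (h ▸ (hspec m₂ hm₂).1)
  have huniq := hM.2 (f m₂) hsx
  refine huniq.unique ⟨hm₁, ?_⟩ ⟨hm₂, ?_⟩
  · rcases h1 with h | h
    · exact Or.inl h.symm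
    · exact Or.inr h.symm
  · rcases h2 with h | h
    · exact Or.inl h.symm
    · exact Or.inr h.symm

lemma edsx_card {x : V} {M : Finset V} (hM : EDSx G x M) : M.card = gx G x := by
  obtain ⟨E, hE, hcard⟩ := exists_gxSet G x
  exact le_antisymm (hcard ▸ edsx_card_le G hM hE) (gx_le_card G (edsx_dsx G hM))

lemma gx_succ (hvc : ∀ v : V, domNum (vdel G v) < domNum G) (x : V) :
    gx G x + 1 = domNum G := by
  have h1 : gx G x < domNum G := by
    rw [← gx_eq_domNum_vdel]; exact hvc x
  have h2 : domNum G ≤ gx G x + 1 := by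
    obtain ⟨E, hE, hcard⟩ := exists_gxSet G x
    have hdom : IsDomSet G (insert x E) := by
      intro v
      by_cases hv : v = x
      · exact ⟨x, Finset.mem_insert_self x E, Or.inl hv.symm⟩
      · obtain ⟨u, huE, hcond⟩ := hE.2 v hv
        exact ⟨u, Finset.mem_insert_of_mem huE, hcond⟩
    calc domNum G ≤ (insert x E).card := domNum_le_card G hdom
    _ ≤ E.card + 1 := Finset.card_insert_le x E
    _ = gx G x + 1 := by rw [hcard]
  omega

lemma edsx_not_adj (hvc : ∀ v : V, domNum (vdel G v) < domNum G)
    {x : V} {M : Finset V} (hM : EDSx G x M) {m : V} (hm : m ∈ M) : ¬ G.Adj m x := by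
  intro hadj
  have hdom : IsDomSet G M := by
    intro v
    by_cases hv : v = x
    · exact ⟨m, hm, Or.inr (hv ▸ hadj)⟩
    · obtain ⟨u, ⟨huM, hcond⟩, -⟩ := hM.2 v hv
      exact ⟨u, huM, hcond⟩
  have h1 : domNum G ≤ M.card := domNum_le_card G hdom
  have h2 : M.card = gx G x := edsx_card G hM
  have h3 := gx_succ G hvc x
  omega

/-- The crossing lemma: if `M` is an EDS of `G - v` with `u ∈ M`, and `D` is an EDS of
`G - u` with `v ∉ D`, we get a contradiction. -/
lemma cross (hvc : ∀ v : V, domNum (vdel G v) < domNum G)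
    {v u : V} {M D : Finset V} (hM : EDSx G v M) (hD : EDSx G u D)
    (huM : u ∈ M) (hvD : v ∉ D) : False := by
  have hcard : D.card = M.card := by
    have h1 := edsx_card G hM
    have h2 := edsx_card G hD
    have h3 := gx_succ G hvc v
    have h4 := gx_succ G hvc u
    omega
  have hdom : ∀ d : {d // d ∈ D}, ∃! m : V, m ∈ M ∧ (m = d.1 ∨ G.Adj m d.1) := fun d =>
    hM.2 d.1 (fun h => hvD (h ▸ d.2))
  set f : {d // d ∈ D} → {m // m ∈ M} :=
    fun d => ⟨(hdom d).choose, (hdom d).choose_spec.1.1⟩ with hfdef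
  have hf : ∀ d, ((f d).1 = d.1 ∨ G.Adj (f d).1 d.1) := fun d => (hdom d).choose_spec.1.2
  have hfu : ∀ d : {d // d ∈ D}, (f d).1 ≠ u := by
    intro d h
    rcases h ▸ hf d with h1 | h1
    · exact hD.1 (h1 ▸ d.2)
    · exact edsx_not_adj G hvc hD d.2 (G.adj_symm h1)
  have hinj : Function.Injective f := by
    intro d₁ d₂ he
    have h1 := hf d₁
    have h2 := hf d₂
    rw [he] at h1
    have huniq := hD.2 (f d₂).1 (hfu d₂)
    refine Subtype.ext (huniq.unique ⟨d₁.2, ?_⟩ ⟨d₂.2, ?_⟩)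
    · rcases h1 with h | h
      · exact Or.inl h.symm
      · exact Or.inr (G.adj_symm h)
    · rcases h2 with h | h
      · exact Or.inl h.symm
      · exact Or.inr (G.adj_symm h)
  have hsurj : Function.Surjective f := by
    have hc : Fintype.card {d // d ∈ D} = Fintype.card {m // m ∈ M} := by
      simpa [Fintype.card_coe] using hcard
    exact ((Fintype.bijective_iff_injective_and_card f).2 ⟨hinj, hc⟩).2
  obtain ⟨d, hd⟩ := hsurj ⟨u, huM⟩
  exact hfu d (congrArg Subtype.val hd)

/-- Uniqueness of the EDS of `G - v`. -/
lemma edsx_unique (hED : HypoED G) (hvc : ∀ v : V, domNum (vdel G v) < domNum G)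
    {v : V} {M₁ M₂ : Finset V} (h1 : EDSx G v M₁) (h2 : EDSx G v M₂) : M₁ = M₂ := by
  have hcard : M₂.card ≤ M₁.card := by
    rw [edsx_card G h1, edsx_card G h2]
  refine Finset.eq_of_subset_of_card_le ?_ hcard
  intro u huM₁
  obtain ⟨D₀, hD₀⟩ := hED.2 u
  have hD : EDSx G u (D₀.map (Function.Embedding.subtype _)) := (isEDS_map_iff G u D₀).1 hD₀
  by_cases hv : v ∈ D₀.map (Function.Embedding.subtype _)
  · by_contra huM₂
    exact cross G hvc hD h2 hv huM₂
  · exact absurd (cross G hvc h1 hD huM₁ hv) not_false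

end Core

/-! ### Counting for regular graphs -/

section Regular

variable [Fintype V] [DecidableEq V] (G : SimpleGraph V) [DecidableRel G.Adj]
set_option linter.unusedSectionVars false

/-- The number of vertices of `S` dominating `y`. -/
def dc (S : Finset V) (y : V) : ℕ := (S.filter (fun m => m = y ∨ G.Adj m y)).card

lemma dc_eq_one_iff {S : Finset V} {y : V} :
    dc G S y = 1 ↔ ∃! u : V, u ∈ S ∧ (u = y ∨ G.Adj u y) := by
  unfold dc
  rw [Finset.card_eq_one]
  constructor
  · rintro ⟨a, ha⟩
    have haa : a ∈ S ∧ (a = y ∨ G.Adj a y) := by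
      have : a ∈ S.filter (fun m => m = y ∨ G.Adj m y) := ha ▸ Finset.mem_singleton_self a
      exact Finset.mem_filter.1 this |>.imp_left id
    refine ⟨a, ⟨haa.1, haa.2⟩, ?_⟩
    intro z hz
    have : z ∈ S.filter (fun m => m = y ∨ G.Adj m y) := Finset.mem_filter.2 ⟨hz.1, hz.2⟩
    rw [ha, Finset.mem_singleton] at this
    exact this
  · rintro ⟨u, hu, huniq⟩
    refine ⟨u, ?_⟩
    ext z
    rw [Finset.mem_filter, Finset.mem_singleton]
    constructor
    · intro hz; exact huniq z ⟨hz.1, hz.2⟩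
    · rintro rfl; exact ⟨hu.1, hu.2⟩

lemma closed_nbhd_card {m : V} {k : ℕ} (h : G.IsRegularOfDegree k) :
    (Finset.univ.filter (fun y => m = y ∨ G.Adj m y)).card = k + 1 := by
  have e : Finset.univ.filter (fun y => m = y ∨ G.Adj m y) = insert m (G.neighborFinset m) := by
    ext y
    simp [Finset.mem_filter, eq_comm, adj_comm]
  rw [e, Finset.card_insert_of_notMem (by simp), card_neighborFinset_eq_degree, h m]

lemma sum_dc (S : Finset V) (x : V) :
    ∑ y ∈ Finset.univ.erase x, dc G S y
      = ∑ m ∈ S, ((Finset.univ.erase x).filter (fun y => m = y ∨ G.Adj m y)).card := by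
  unfold dc
  simp_rw [Finset.card_filter]
  exact Finset.sum_comm

lemma erase_filter_card_le {m x : V} {k : ℕ} (h : G.IsRegularOfDegree k) :
    ((Finset.univ.erase x).filter (fun y => m = y ∨ G.Adj m y)).card ≤ k + 1 := by
  calc ((Finset.univ.erase x).filter (fun y => m = y ∨ G.Adj m y)).card
      ≤ (Finset.univ.filter (fun y => m = y ∨ G.Adj m y)).card :=
        Finset.card_le_card (Finset.filter_subset_filter _ (Finset.erase_subset x _))
    _ = k + 1 := closed_nbhd_card G h

lemma erase_filter_card_eq {m x : V} {k : ℕ} (h : G.IsRegularOfDegree k)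
    (hmx : m ≠ x) (hadj : ¬ G.Adj m x) :
    ((Finset.univ.erase x).filter (fun y => m = y ∨ G.Adj m y)).card = k + 1 := by
  have e : (Finset.univ.erase x).filter (fun y => m = y ∨ G.Adj m y)
      = Finset.univ.filter (fun y => m = y ∨ G.Adj m y) := by
    ext y
    simp only [Finset.mem_filter, Finset.mem_erase, Finset.mem_univ, true_and, and_true]
    constructor
    · rintro ⟨-, h2⟩; exact h2
    · intro h2
      refine ⟨fun hyx => ?_, h2⟩
      subst hyx
      rcases h2 with h3 | h3
      · exact hmx h3
      · exact hadj h3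
  rw [e, closed_nbhd_card G h]

/-- In a regular graph, a dominating set of `G - x` of the same size as an EDS
is itself an EDS. -/
lemma dsx_is_edsx (hvc : ∀ v : V, domNum (vdel G v) < domNum G)
    {k : ℕ} (hreg : G.IsRegularOfDegree k) {x : V} {M D : Finset V}
    (hM : EDSx G x M) (hD : DSx G x D) (hcard : D.card = M.card) : EDSx G x D := by
  have hsumM : ∑ y ∈ Finset.univ.erase x, dc G M y = M.card * (k + 1) := by
    rw [sum_dc]
    rw [Finset.sum_congr rfl (fun m hm =>
      erase_filter_card_eq G hreg (fun h => hM.1 (by rw [← h]; exact hm)) (edsx_not_adj G hvc hM hm))]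
    rw [Finset.sum_const, smul_eq_mul]
  have hMone : ∀ y ∈ Finset.univ.erase x, dc G M y = 1 := by
    intro y hy
    exact (dc_eq_one_iff G).2 (hM.2 y (Finset.mem_erase.1 hy).1)
  have hcarderase : (Finset.univ.erase x).card = M.card * (k + 1) := by
    calc (Finset.univ.erase x).card = ∑ y ∈ Finset.univ.erase x, 1 := by
          rw [Finset.sum_const, smul_eq_mul, mul_one]
      _ = ∑ y ∈ Finset.univ.erase x, dc G M y := Finset.sum_congr rfl
          (fun y hy => (hMone y hy).symm)
      _ = M.card * (k + 1) := hsumM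
  have hDge : ∀ y ∈ Finset.univ.erase x, 1 ≤ dc G D y := by
    intro y hy
    obtain ⟨u, huD, hcond⟩ := hD.2 y (Finset.mem_erase.1 hy).1
    have : u ∈ D.filter (fun m => m = y ∨ G.Adj m y) := Finset.mem_filter.2 ⟨huD, hcond⟩
    exact Finset.card_pos.2 ⟨u, this⟩
  have hsumD : ∑ y ∈ Finset.univ.erase x, dc G D y ≤ M.card * (k + 1) := by
    rw [sum_dc]
    calc ∑ m ∈ D, ((Finset.univ.erase x).filter (fun y => m = y ∨ G.Adj m y)).card
        ≤ ∑ m ∈ D, (k + 1) := Finset.sum_le_sum (fun m _ => erase_filter_card_le G hreg)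
      _ = D.card * (k + 1) := by rw [Finset.sum_const, smul_eq_mul]
      _ = M.card * (k + 1) := by rw [hcard]
  have hsums : ∑ y ∈ Finset.univ.erase x, (1 : ℕ)
      = ∑ y ∈ Finset.univ.erase x, dc G D y := by
    have h1 : ∑ y ∈ Finset.univ.erase x, (1 : ℕ) ≤ ∑ y ∈ Finset.univ.erase x, dc G D y :=
      Finset.sum_le_sum hDge
    have h2 : ∑ y ∈ Finset.univ.erase x, dc G D y ≤ ∑ y ∈ Finset.univ.erase x, (1 : ℕ) := by
      rw [Finset.sum_const, smul_eq_mul, mul_one]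
      calc ∑ y ∈ Finset.univ.erase x, dc G D y ≤ M.card * (k+1) := hsumD
        _ = (Finset.univ.erase x).card := hcarderase.symm
    omega
  have hall : ∀ y ∈ Finset.univ.erase x, dc G D y = 1 := by
    intro y hy
    exact ((Finset.sum_eq_sum_iff_of_le hDge).1 hsums y hy).symm
  refine ⟨hD.1, fun v hv => ?_⟩
  exact (dc_eq_one_iff G).1 (hall v (Finset.mem_erase.2 ⟨hv, Finset.mem_univ v⟩))

end Regular

/-! ### Main theorem -/

theorem hypoED_vc_unique_EDS [Fintype V] [DecidableEq V] (G : SimpleGraph V)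
    [DecidableRel G.Adj] (hED : HypoED G)
    (hvc : ∀ v : V, domNum (vdel G v) < domNum G) :
    (∀ x : V, ∃! D : Finset {u : V // u ≠ x}, IsEDS (vdel G x) D) ∧
    ((∃ k : ℕ, G.IsRegularOfDegree k) →
      (∀ x : V, ∃! D : Finset {u : V // u ≠ x}, IsGammaSet (vdel G x) D) ∧
        HypoUD G) := by
  have part1 : ∀ x : V, ∃! D : Finset {u : V // u ≠ x}, IsEDS (vdel G x) D := by
    intro x
    obtain ⟨D₀, hD₀⟩ := hED.2 x
    refine ⟨D₀, hD₀, ?_⟩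
    intro D hD
    exact Finset.map_injective _
      (edsx_unique G hED hvc ((isEDS_map_iff G x D).1 hD) ((isEDS_map_iff G x D₀).1 hD₀))
  refine ⟨part1, ?_⟩
  rintro ⟨k, hreg⟩
  have part2 : ∀ x : V, ∃! D : Finset {u : V // u ≠ x}, IsGammaSet (vdel G x) D := by
    intro x
    obtain ⟨D₀, hD₀⟩ := hED.2 x
    have hE : EDSx G x (D₀.map (Function.Embedding.subtype _)) := (isEDS_map_iff G x D₀).1 hD₀
    have hcard₀ : D₀.card = domNum (vdel G x) := by
      have h1 := edsx_card G hE
      rw [Finset.card_map] at h1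
      rw [h1, gx_eq_domNum_vdel]
    have hg : IsGammaSet (vdel G x) D₀ := by
      refine ⟨fun v => ?_, hcard₀⟩
      obtain ⟨u, hu, -⟩ := hD₀ v
      exact ⟨u, hu.1, hu.2⟩
    refine ⟨D₀, hg, ?_⟩
    intro D hDg
    have hDS : DSx G x (D.map (Function.Embedding.subtype _)) := (isDomSet_map_iff G x D).1 hDg.1
    have hcard : (D.map (Function.Embedding.subtype _)).card
        = (D₀.map (Function.Embedding.subtype _)).card := by
      rw [Finset.card_map, Finset.card_map, hDg.2, hcard₀]
    have hDE : EDSx G x (D.map (Function.Embedding.subtype _)) :=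
      dsx_is_edsx G hvc hreg hE hDS hcard
    exact Finset.map_injective _ (edsx_unique G hED hvc hDE hE)
  refine ⟨part2, ?_, part2⟩
  -- G has two distinct γ-sets.
  have hedge : ∃ a b : V, G.Adj a b := by
    by_contra h
    push_neg at h
    refine hED.1 ⟨Finset.univ, fun v => ⟨v, ⟨Finset.mem_univ v, Or.inl rfl⟩, ?_⟩⟩
    rintro y ⟨-, rfl | hadj⟩
    · rfl
    · exact absurd hadj (h y v)
  obtain ⟨a, b, hab⟩ := hedge
  have hle : domNum G ≤ Fintype.card V - 1 := by
    have hdom : IsDomSet G (Finset.univ.erase a) := by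
      intro v
      by_cases hv : v = a
      · exact ⟨b, Finset.mem_erase.2 ⟨(G.ne_of_adj hab).symm, Finset.mem_univ b⟩,
          Or.inr (hv ▸ G.adj_symm hab)⟩
      · exact ⟨v, Finset.mem_erase.2 ⟨hv, Finset.mem_univ v⟩, Or.inl rfl⟩
    calc domNum G ≤ (Finset.univ.erase a).card := domNum_le_card G hdom
      _ = Fintype.card V - 1 := by rw [Finset.card_erase_of_mem (Finset.mem_univ a),
        Finset.card_univ]
  -- for each z, a γ-set of G containing z
  have hSz : ∀ z : V, ∃ S : Finset V, IsGammaSet G S ∧ z ∈ S := by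
    intro z
    obtain ⟨D₀, hD₀⟩ := hED.2 z
    set E := D₀.map (Function.Embedding.subtype _) with hEdef
    have hE : EDSx G z E := (isEDS_map_iff G z D₀).1 hD₀
    refine ⟨insert z E, ⟨?_, ?_⟩, Finset.mem_insert_self z E⟩
    · intro v
      by_cases hv : v = z
      · exact ⟨z, Finset.mem_insert_self z E, Or.inl hv.symm⟩
      · obtain ⟨u, huE, hcond⟩ := (edsx_dsx G hE).2 v hv
        exact ⟨u, Finset.mem_insert_of_mem huE, hcond⟩
    · rw [Finset.card_insert_of_notMem hE.1, edsx_card G hE, gx_succ G hvc z]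
  by_contra hcon
  push_neg at hcon
  obtain ⟨Sa, hSa, haSa⟩ := hSz a
  have huniv : ∀ z : V, z ∈ Sa := by
    intro z
    obtain ⟨Sz, hSzg, hzSz⟩ := hSz z
    rcases hcon Sz Sa hSzg hSa with rfl
    exact hzSz
  have hSauniv : Sa = Finset.univ := Finset.eq_univ_iff_forall.2 huniv
  have hcardSa : domNum G = Fintype.card V := by
    rw [← hSa.2, hSauniv, Finset.card_univ]
  have hpos : 1 ≤ Fintype.card V := Fintype.card_pos_iff.2 ⟨a⟩
  omega
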